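/- Let d = 1, let μ = (μ_t) be a curve in P₂(ℝ), and let Γ be a law on C([0,1], ℝ) with time marginals μ_t such that for every pair s < t, the joint law of (γ(s), γ(t)) under Γ is the quantile coupling of μ_s and μ_t. Then A(Γ) = E(μ): the action of Γ equals the Wasserstein energy of the marginal curve. -/

import Mathlib

open Set MeasureTheory Filter
open scoped ENNReal

/-- `π` is a coupling of `μ` and `ν`. -/
def IsCoupling {E : Type*} [MeasurableSpace E] (π : Measure (E × E)) (μ ν : Measure E) : Prop :=
  π.map Prod.fst = μ ∧ π.map Prod.snd = ν

/-- The quadratic transport cost `∫ ‖y - x‖² dπ(x,y)` of a plan `π`. -/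
noncomputable def transportCost {E : Type*} [NormedAddCommGroup E] [MeasurableSpace E]
    (π : Measure (E × E)) : ℝ≥0∞ :=
  ∫⁻ p, ENNReal.ofReal (‖p.2 - p.1‖ ^ 2) ∂π

/-- The squared 2-Wasserstein distance: infimum of the quadratic cost over all couplings. -/
noncomputable def W2sq {E : Type*} [NormedAddCommGroup E] [MeasurableSpace E]
    (μ ν : Measure E) : ℝ≥0∞ :=
  ⨅ (π : Measure (E × E)) (_ : IsCoupling π μ ν), transportCost π

/-- Energy sum of a curve along the partition points `r 0 < r 1 < ... < r (m+1)`. -/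
noncomputable def energySum {X : Type*} [MetricSpace X] (γ : ℝ → X) {m : ℕ}
    (r : Fin (m + 2) → ℝ) : ℝ :=
  ∑ k : Fin (m + 1), dist (γ (r k.castSucc)) (γ (r k.succ)) ^ 2 / (r k.succ - r k.castSucc)

/-- `r` enumerates a partition `0 = r 0 < r 1 < ... < r (m+1) = 1` of `[0, 1]`. -/
def IsPartition {m : ℕ} (r : Fin (m + 2) → ℝ) : Prop :=
  StrictMono r ∧ r 0 = 0 ∧ r (Fin.last (m + 1)) = 1

/-- The energy of a curve on `[0,1]`: supremum of the energy sums over all partitions. -/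
noncomputable def energy {X : Type*} [MetricSpace X] (γ : ℝ → X) : ℝ≥0∞ :=
  ⨆ (m : ℕ) (r : Fin (m + 2) → ℝ) (_ : IsPartition r), ENNReal.ofReal (energySum γ r)

/-- The energy of a curve of measures in the Wasserstein space `(P₂, W₂)`. -/
noncomputable def energyW2 {E : Type*} [NormedAddCommGroup E] [MeasurableSpace E]
    (μ : ℝ → MeasureTheory.Measure E) : ℝ≥0∞ :=
  ⨆ (m : ℕ) (r : Fin (m + 2) → ℝ) (_ : IsPartition r),
    ∑ k : Fin (m + 1),
      W2sq (μ (r k.castSucc)) (μ (r k.succ)) / ENNReal.ofReal (r k.succ - r k.castSucc)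


/-- The cumulative distribution function of a measure on ℝ. -/
noncomputable def cdf (μ : MeasureTheory.Measure ℝ) (x : ℝ) : ℝ := (μ (Set.Iic x)).toReal

/-- The quantile function (generalized inverse of the cdf) of a measure on ℝ. -/
noncomputable def qf (μ : MeasureTheory.Measure ℝ) (u : ℝ) : ℝ := sInf {x : ℝ | u ≤ cdf μ x}

/-- The quantile coupling of two measures on ℝ: the joint law of
`(F_μ⁻¹(U), F_ν⁻¹(U))` for `U` uniform on `(0,1)`. -/
noncomputable def quantileCoupling (μ ν : MeasureTheory.Measure ℝ) :
    MeasureTheory.Measure (ℝ × ℝ) :=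
  ((MeasureTheory.volume : MeasureTheory.Measure ℝ).restrict (Set.Ioo 0 1)).map
    (fun u => (qf μ u, qf ν u))



open scoped Topology

section QuantilePrelims

variable {μ ν : Measure ℝ} [IsProbabilityMeasure μ] [IsProbabilityMeasure ν]

lemma cdf_eq_cdf (x : ℝ) : cdf μ x = ProbabilityTheory.cdf μ x :=
  (ProbabilityTheory.cdf_eq_real μ x).symm

lemma cdf_fun_eq : cdf μ = ⇑(ProbabilityTheory.cdf μ) := funext cdf_eq_cdf

lemma cdf_mono : Monotone (cdf μ) := by
  rw [cdf_fun_eq]; exact ProbabilityTheory.monotone_cdf μ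

lemma cdf_nonneg' (x : ℝ) : 0 ≤ cdf μ x := ENNReal.toReal_nonneg

lemma cdf_le_one' (x : ℝ) : cdf μ x ≤ 1 := by
  rw [cdf_eq_cdf]; exact ProbabilityTheory.cdf_le_one μ x

lemma ofReal_cdf' (x : ℝ) : ENNReal.ofReal (cdf μ x) = μ (Iic x) := by
  rw [cdf_eq_cdf]; exact ProbabilityTheory.ofReal_cdf μ x

lemma exists_cdf_ge {u : ℝ} (hu : u < 1) : ∃ x, x ∈ {x : ℝ | u ≤ cdf μ x} := by
  have h := (ProbabilityTheory.tendsto_cdf_atTop μ).eventually (eventually_ge_nhds hu)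
  obtain ⟨x, hx⟩ := h.exists
  exact ⟨x, by rw [mem_setOf_eq, cdf_eq_cdf]; exact hx⟩

lemma bddBelow_qfSet {u : ℝ} (hu : 0 < u) : BddBelow {x : ℝ | u ≤ cdf μ x} := by
  have h := (ProbabilityTheory.tendsto_cdf_atBot μ).eventually (eventually_lt_nhds hu)
  obtain ⟨x0, hx0⟩ := h.exists
  refine ⟨x0, fun y hy => ?_⟩
  by_contra h'
  push_neg at h'
  have : cdf μ y ≤ cdf μ x0 := cdf_mono h'.le
  rw [cdf_eq_cdf x0] at this
  exact absurd (hy.trans this) (not_le.2 hx0)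

lemma qf_le_iff {u x : ℝ} (h0 : 0 < u) (h1 : u < 1) : qf μ u ≤ x ↔ u ≤ cdf μ x := by
  constructor
  · intro h
    have key : ∀ t ∈ Ioi x, u ≤ cdf μ t := by
      intro t ht
      obtain ⟨y, hy, hyt⟩ := (csInf_lt_iff (bddBelow_qfSet h0) (exists_cdf_ge h1)).1
        (lt_of_le_of_lt h ht)
      exact hy.trans (cdf_mono hyt.le)
    have hrc : Tendsto (cdf μ) (𝓝[>] x) (𝓝 (cdf μ x)) := by
      rw [cdf_fun_eq]
      exact ((ProbabilityTheory.cdf μ).right_continuous x).tendsto.mono_left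
        (nhdsWithin_mono _ Ioi_subset_Ici_self)
    exact ge_of_tendsto hrc (eventually_nhdsWithin_of_forall key)
  · intro h
    exact csInf_le (bddBelow_qfSet h0) h

lemma lt_qf_iff {u x : ℝ} (h0 : 0 < u) (h1 : u < 1) : x < qf μ u ↔ cdf μ x < u := by
  rw [← not_le, ← not_le, qf_le_iff h0 h1]

/-- measurable modification of `qf` -/
noncomputable def qf' (μ : Measure ℝ) (u : ℝ) : ℝ := if u ∈ Ioo (0:ℝ) 1 then qf μ u else 0

lemma qf'_eq_ae : qf' μ =ᵐ[volume.restrict (Ioo (0:ℝ) 1)] qf μ :=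
  (ae_restrict_mem measurableSet_Ioo).mono fun u hu => if_pos hu

lemma measurable_qf' (μ : Measure ℝ) [IsProbabilityMeasure μ] : Measurable (qf' μ) := by
  apply measurable_of_Iic
  intro x
  have : qf' μ ⁻¹' Iic x =
      (Ioo 0 1 ∩ Iic (cdf μ x)) ∪ (if (0:ℝ) ≤ x then (Ioo (0:ℝ) 1)ᶜ else ∅) := by
    ext u
    by_cases hu : u ∈ Ioo (0:ℝ) 1
    · rw [mem_preimage, mem_Iic, qf', if_pos hu, qf_le_iff hu.1 hu.2]
      simp only [mem_union, mem_inter_iff, hu, true_and]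
      by_cases hx : (0:ℝ) ≤ x <;> simp [hx, hu, mem_compl_iff]
    · simp only [mem_preimage, mem_Iic, qf', if_neg hu, mem_union, mem_inter_iff, hu, false_and,
        false_or]
      by_cases hx : (0:ℝ) ≤ x <;> simp [hx, hu, mem_compl_iff]
  rw [this]
  refine (measurableSet_Ioo.inter measurableSet_Iic).union ?_
  split_ifs
  · exact measurableSet_Ioo.compl
  · exact MeasurableSet.empty

instance : IsProbabilityMeasure (volume.restrict (Ioo (0:ℝ) 1)) :=
  ⟨by simp [Real.volume_Ioo]⟩

lemma vol_Ioo_inter_Iic {c : ℝ} (h1 : c ≤ 1) :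
    volume (Ioo (0:ℝ) 1 ∩ Iic c) = ENNReal.ofReal c := by
  have hsub : Ioo (0:ℝ) 1 ∩ Iic c ⊆ Ioc 0 c := fun u hu => ⟨hu.1.1, hu.2⟩
  have hsub2 : Ioc (0:ℝ) c ⊆ (Ioo 0 1 ∩ Iic c) ∪ {1} := by
    intro u hu
    by_cases h : u = 1
    · exact Or.inr (by simp [h])
    · exact Or.inl ⟨⟨hu.1, lt_of_le_of_ne (hu.2.trans h1) h⟩, hu.2⟩
  refine le_antisymm ((measure_mono hsub).trans_eq (by simp [Real.volume_Ioc])) ?_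
  calc ENNReal.ofReal c = volume (Ioc (0:ℝ) c) := by simp [Real.volume_Ioc]
    _ ≤ volume ((Ioo (0:ℝ) 1 ∩ Iic c) ∪ {1}) := measure_mono hsub2
    _ ≤ volume (Ioo (0:ℝ) 1 ∩ Iic c) + volume ({1} : Set ℝ) := measure_union_le _ _
    _ = volume (Ioo (0:ℝ) 1 ∩ Iic c) := by simp

lemma vol_Ioo_inter_Ioi {m : ℝ} (h0 : 0 ≤ m) :
    volume (Ioo (0:ℝ) 1 ∩ Ioi m) = ENNReal.ofReal (1 - m) := by
  have : Ioo (0:ℝ) 1 ∩ Ioi m = Ioo m 1 := by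
    ext u
    exact ⟨fun hu => ⟨hu.2, hu.1.2⟩, fun hu => ⟨⟨lt_of_le_of_lt h0 hu.1, hu.2⟩, hu.1⟩⟩
  rw [this, Real.volume_Ioo]

lemma map_qf'_eq (μ : Measure ℝ) [IsProbabilityMeasure μ] :
    (volume.restrict (Ioo (0:ℝ) 1)).map (qf' μ) = μ := by
  have hmeas := measurable_qf' μ
  have : IsProbabilityMeasure ((volume.restrict (Ioo (0:ℝ) 1)).map (qf' μ)) :=
    Measure.isProbabilityMeasure_map hmeas.aemeasurable
  refine Measure.ext_of_Iic _ _ (fun x => ?_)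
  rw [Measure.map_apply hmeas measurableSet_Iic,
    Measure.restrict_apply (hmeas measurableSet_Iic)]
  have hset : qf' μ ⁻¹' Iic x ∩ Ioo 0 1 = Ioo (0:ℝ) 1 ∩ Iic (cdf μ x) := by
    ext u
    constructor
    · rintro ⟨hle, hu⟩
      rw [mem_preimage, mem_Iic, qf', if_pos hu, qf_le_iff hu.1 hu.2] at hle
      exact ⟨hu, hle⟩
    · rintro ⟨hu, hle⟩
      refine ⟨?_, hu⟩
      rw [mem_preimage, mem_Iic, qf', if_pos hu, qf_le_iff hu.1 hu.2]
      exact hle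
  rw [hset, vol_Ioo_inter_Iic (cdf_le_one' x), ofReal_cdf']

lemma map_qf_eq (μ : Measure ℝ) [IsProbabilityMeasure μ] :
    (volume.restrict (Ioo (0:ℝ) 1)).map (qf μ) = μ := by
  rw [← Measure.map_congr qf'_eq_ae, map_qf'_eq]

lemma qc_eq' : quantileCoupling μ ν =
    (volume.restrict (Ioo (0:ℝ) 1)).map (fun u => (qf' μ u, qf' ν u)) := by
  refine Measure.map_congr ?_
  filter_upwards [qf'_eq_ae (μ := μ), qf'_eq_ae (μ := ν)] with u h1 h2
  simp [h1, h2]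

instance : IsProbabilityMeasure (quantileCoupling μ ν) := by
  rw [qc_eq' (μ := μ) (ν := ν)]
  exact Measure.isProbabilityMeasure_map ((measurable_qf' μ).prodMk (measurable_qf' ν)).aemeasurable


lemma prob_Ioi_eq (μ : Measure ℝ) [IsProbabilityMeasure μ] (s : ℝ) :
    μ (Ioi s) = 1 - ENNReal.ofReal (cdf μ s) := by
  rw [← compl_Iic, prob_compl_eq_one_sub measurableSet_Iic, ofReal_cdf']

lemma qc_apply_Ioi (s t : ℝ) :
    quantileCoupling μ ν (Ioi s ×ˢ Ioi t) = min (μ (Ioi s)) (ν (Ioi t)) := by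
  rw [qc_eq', Measure.map_apply ((measurable_qf' μ).prodMk (measurable_qf' ν))
    (measurableSet_Ioi.prod measurableSet_Ioi),
    Measure.restrict_apply (((measurable_qf' μ).prodMk (measurable_qf' ν))
      (measurableSet_Ioi.prod measurableSet_Ioi))]
  have hset : (fun u => (qf' μ u, qf' ν u)) ⁻¹' (Ioi s ×ˢ Ioi t) ∩ Ioo 0 1
      = Ioo (0:ℝ) 1 ∩ Ioi (max (cdf μ s) (cdf ν t)) := by
    ext u
    constructor
    · rintro ⟨hpre, hu⟩
      rw [mem_preimage, mem_prod, mem_Ioi, mem_Ioi, qf', qf', if_pos hu, if_pos hu] at hpre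
      refine ⟨hu, ?_⟩
      rw [mem_Ioi, max_lt_iff]
      exact ⟨(lt_qf_iff hu.1 hu.2).1 hpre.1, (lt_qf_iff hu.1 hu.2).1 hpre.2⟩
    · rintro ⟨hu, hmax⟩
      rw [mem_Ioi, max_lt_iff] at hmax
      refine ⟨?_, hu⟩
      rw [mem_preimage, mem_prod, mem_Ioi, mem_Ioi, qf', qf', if_pos hu, if_pos hu]
      exact ⟨(lt_qf_iff hu.1 hu.2).2 hmax.1, (lt_qf_iff hu.1 hu.2).2 hmax.2⟩
  rw [hset, vol_Ioo_inter_Ioi (le_max_of_le_left (cdf_nonneg' s)),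
    prob_Ioi_eq μ s, prob_Ioi_eq ν t]
  rcases le_total (cdf μ s) (cdf ν t) with h | h
  · rw [max_eq_right h, min_eq_right (tsub_le_tsub_left (ENNReal.ofReal_le_ofReal h) 1),
      ENNReal.ofReal_sub _ (cdf_nonneg' t), ENNReal.ofReal_one]
  · rw [max_eq_left h, min_eq_left (tsub_le_tsub_left (ENNReal.ofReal_le_ofReal h) 1),
      ENNReal.ofReal_sub _ (cdf_nonneg' s), ENNReal.ofReal_one]

lemma isCoupling_qc : IsCoupling (quantileCoupling μ ν) μ ν := by
  constructor
  · rw [qc_eq', Measure.map_map measurable_fst ((measurable_qf' μ).prodMk (measurable_qf' ν))]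
    exact map_qf'_eq μ
  · rw [qc_eq', Measure.map_map measurable_snd ((measurable_qf' μ).prodMk (measurable_qf' ν))]
    exact map_qf'_eq ν

end QuantilePrelims


section Hoeffding

/-- elementary bump: `1_{s<b} - 1_{s<a}`. -/
noncomputable def efn (b a s : ℝ) : ℝ :=
  (Iio b).indicator (1 : ℝ → ℝ) s - (Iio a).indicator (1 : ℝ → ℝ) s

lemma efn_eq_cases (b a : ℝ) : efn b a = fun s =>
    (Ico a b).indicator (1 : ℝ → ℝ) s - (Ico b a).indicator (1 : ℝ → ℝ) s := by
  funext s
  rcases lt_or_ge s a with h1 | h1 <;> rcases lt_or_ge s b with h2 | h2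
  · simp [efn, indicator_apply, mem_Iio, mem_Ico, h1, h2, h1.not_ge, h2.not_ge]
  · simp [efn, indicator_apply, mem_Iio, mem_Ico, h1, h2, h1.not_ge, not_lt.mpr h2]
  · simp [efn, indicator_apply, mem_Iio, mem_Ico, h1, h2, h2.not_ge, not_lt.mpr h1]
  · simp [efn, indicator_apply, mem_Iio, mem_Ico, h2, not_lt.mpr h1, not_lt.mpr h2]

lemma integrable_indicator_Ico (a b : ℝ) :
    Integrable ((Ico a b).indicator (1 : ℝ → ℝ)) volume :=
  (integrable_indicator_iff measurableSet_Ico).2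
    (integrableOn_const measure_Ico_lt_top.ne)

lemma efn_integrable (b a : ℝ) : Integrable (efn b a) volume := by
  rw [efn_eq_cases]
  exact (integrable_indicator_Ico a b).sub (integrable_indicator_Ico b a)

lemma integral_efn (b a : ℝ) : ∫ s, efn b a s = b - a := by
  simp only [efn_eq_cases]
  rw [integral_sub (integrable_indicator_Ico a b) (integrable_indicator_Ico b a),
    integral_indicator_one measurableSet_Ico, integral_indicator_one measurableSet_Ico,
    measureReal_def, measureReal_def, Real.volume_Ico, Real.volume_Ico]
  rcases le_total a b with h | h
  · rw [ENNReal.toReal_ofReal (by linarith), ENNReal.ofReal_of_nonpos (by linarith)]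
    simp
  · rw [ENNReal.ofReal_of_nonpos (by linarith : b - a ≤ 0), ENNReal.toReal_ofReal (by linarith)]
    simp only [ENNReal.toReal_zero, zero_sub, neg_sub]

lemma abs_efn (b a s : ℝ) : |efn b a s| =
    (Ico a b).indicator (1 : ℝ → ℝ) s + (Ico b a).indicator (1 : ℝ → ℝ) s := by
  rw [efn_eq_cases]
  rcases le_total a b with h | h
  · rw [Ico_eq_empty (not_lt.2 h), indicator_empty]
    simp only [Pi.zero_apply, sub_zero, add_zero]
    exact abs_of_nonneg (indicator_nonneg (fun _ _ => zero_le_one) s)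
  · rw [Ico_eq_empty (not_lt.2 h), indicator_empty]
    simp only [Pi.zero_apply, zero_sub, zero_add, abs_neg]
    exact abs_of_nonneg (indicator_nonneg (fun _ _ => zero_le_one) s)

lemma integral_abs_efn (b a : ℝ) : ∫ s, |efn b a s| = |b - a| := by
  simp_rw [abs_efn]
  rw [integral_add (integrable_indicator_Ico a b) (integrable_indicator_Ico b a),
    integral_indicator_one measurableSet_Ico, integral_indicator_one measurableSet_Ico,
    measureReal_def, measureReal_def, Real.volume_Ico, Real.volume_Ico]
  rcases le_total a b with h | h
  · rw [ENNReal.toReal_ofReal (by linarith), ENNReal.ofReal_of_nonpos (by linarith),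
      abs_of_nonneg (by linarith : (0:ℝ) ≤ b - a)]
    simp
  · rw [ENNReal.ofReal_of_nonpos (by linarith : b - a ≤ 0), ENNReal.toReal_ofReal (by linarith),
      abs_of_nonpos (by linarith : b - a ≤ 0)]
    simp

lemma measurable_efn_comp {α : Type*} [MeasurableSpace α] {f g h : α → ℝ}
    (hf : Measurable f) (hg : Measurable g) (hh : Measurable h) :
    Measurable (fun x => efn (f x) (g x) (h x)) := by
  have key : ∀ (u : α → ℝ) (v : α → ℝ), Measurable u → Measurable v →
      Measurable (fun x => (Iio (u x)).indicator (1 : ℝ → ℝ) (v x)) := by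
    intro u v hu hv
    have : (fun x => (Iio (u x)).indicator (1 : ℝ → ℝ) (v x))
        = fun x => if v x < u x then (1:ℝ) else 0 := by
      funext x; simp [indicator_apply]
    rw [this]
    exact Measurable.ite (measurableSet_lt hv hu) measurable_const measurable_const
  exact (key f h hf hh).sub (key g h hg hh)

/-- indicator of `Ioi` as a function of the point. -/
noncomputable def ios (s x : ℝ) : ℝ := (Ioi s).indicator (1 : ℝ → ℝ) x

lemma efn_flip (b a s : ℝ) : efn b a s = ios s b - ios s a := by
  simp [efn, ios, indicator_apply, mem_Iio, mem_Ioi]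

lemma ios_nonneg (s x : ℝ) : 0 ≤ ios s x := indicator_nonneg (fun _ _ => zero_le_one) x

lemma ios_le_one (s x : ℝ) : ios s x ≤ 1 := by
  by_cases h : x ∈ Ioi s <;> simp [ios, indicator_apply, h]

lemma measurable_ios_comp {α : Type*} [MeasurableSpace α] {f : α → ℝ} (hf : Measurable f)
    (s : ℝ) : Measurable (fun x => ios s (f x)) := by
  have : (fun x => ios s (f x)) = fun x => if s < f x then (1:ℝ) else 0 := by
    funext x; simp [ios, indicator_apply]
  rw [this]
  exact Measurable.ite (measurableSet_lt measurable_const hf) measurable_const measurable_const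

lemma integral_ios (μ : Measure ℝ) (s : ℝ) : ∫ x, ios s x ∂μ = (μ (Ioi s)).toReal :=
  integral_indicator_one measurableSet_Ioi

lemma ios_mul_ios (s t : ℝ) (p : ℝ × ℝ) :
    ios s p.1 * ios t p.2 = (Ioi s ×ˢ Ioi t).indicator (1 : ℝ × ℝ → ℝ) p := by
  by_cases h1 : p.1 ∈ Ioi s <;> by_cases h2 : p.2 ∈ Ioi t <;>
    simp [ios, indicator_apply, h1, h2, mem_prod]

section transfer
variable {α β : Type*} [MeasurableSpace α] [MeasurableSpace β]

lemma integrable_fst_comp {ρ : Measure (α × β)} {μ : Measure α} (hρ : ρ.map Prod.fst = μ)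
    {f : α → ℝ} (hf : Measurable f) (h : Integrable f μ) :
    Integrable (fun p : α × β => f p.1) ρ :=
  (integrable_map_measure hf.aestronglyMeasurable measurable_fst.aemeasurable).1 (by rwa [hρ])

lemma integrable_snd_comp {ρ : Measure (α × β)} {ν : Measure β} (hρ : ρ.map Prod.snd = ν)
    {f : β → ℝ} (hf : Measurable f) (h : Integrable f ν) :
    Integrable (fun p : α × β => f p.2) ρ :=
  (integrable_map_measure hf.aestronglyMeasurable measurable_snd.aemeasurable).1 (by rwa [hρ])

lemma integral_fst_comp {ρ : Measure (α × β)} {μ : Measure α} (hρ : ρ.map Prod.fst = μ)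
    {f : α → ℝ} (hf : Measurable f) : ∫ p, f p.1 ∂ρ = ∫ x, f x ∂μ := by
  rw [← hρ]
  exact (integral_map measurable_fst.aemeasurable hf.aestronglyMeasurable).symm

lemma integral_snd_comp {ρ : Measure (α × β)} {ν : Measure β} (hρ : ρ.map Prod.snd = ν)
    {f : β → ℝ} (hf : Measurable f) : ∫ p, f p.2 ∂ρ = ∫ x, f x ∂ν := by
  rw [← hρ]
  exact (integral_map measurable_snd.aemeasurable hf.aestronglyMeasurable).symm

end transfer

end Hoeffding


section HoeffdingMain

variable {μ ν : Measure ℝ} [IsProbabilityMeasure μ] [IsProbabilityMeasure ν]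

lemma integrable_sq_of_lintegral {μ : Measure ℝ} [IsProbabilityMeasure μ]
    (h : ∫⁻ x, ENNReal.ofReal (x ^ 2) ∂μ ≠ ⊤) : Integrable (fun x : ℝ => x ^ 2) μ := by
  refine ⟨(measurable_id.pow_const 2).aestronglyMeasurable, ?_⟩
  rw [hasFiniteIntegral_iff_ofReal (ae_of_all _ fun x => sq_nonneg x)]
  exact lt_top_iff_ne_top.2 h

lemma integrable_id_of_sq {μ : Measure ℝ} [IsProbabilityMeasure μ]
    (h : Integrable (fun x : ℝ => x ^ 2) μ) : Integrable (fun x : ℝ => x) μ := by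
  refine (h.add (integrable_const 1)).mono' measurable_id.aestronglyMeasurable
    (ae_of_all _ fun x => ?_)
  rw [Real.norm_eq_abs]
  simp only [Pi.add_apply]
  nlinarith [sq_abs x, abs_nonneg x, sq_nonneg (|x| - 1)]

set_option maxHeartbeats 2000000 in
theorem hoeffding (π : Measure (ℝ × ℝ)) [IsProbabilityMeasure π] (hπ : IsCoupling π μ ν)
    (hμ2 : Integrable (fun x : ℝ => x ^ 2) μ) (hν2 : Integrable (fun x : ℝ => x ^ 2) ν) :
    Integrable (fun st : ℝ × ℝ => (π (Ioi st.1 ×ˢ Ioi st.2)).toReal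
        - (μ (Ioi st.1)).toReal * (ν (Ioi st.2)).toReal) volume ∧
      ∫ st : ℝ × ℝ, ((π (Ioi st.1 ×ˢ Ioi st.2)).toReal
        - (μ (Ioi st.1)).toReal * (ν (Ioi st.2)).toReal)
      = ∫ p, p.1 * p.2 ∂π - (∫ x, x ∂μ) * (∫ y, y ∂ν) := by
  set σ : Measure ((ℝ × ℝ) × ℝ × ℝ) := π.prod (μ.prod ν) with hσ
  have hmapfst : σ.map Prod.fst = π := by
    rw [hσ, Measure.map_fst_prod]; simp
  have hmapsnd : σ.map Prod.snd = μ.prod ν := by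
    rw [hσ, Measure.map_snd_prod]; simp
  have hprodfst : (μ.prod ν).map Prod.fst = μ := by rw [Measure.map_fst_prod]; simp
  have hprodsnd : (μ.prod ν).map Prod.snd = ν := by rw [Measure.map_snd_prod]; simp
  -- the 4 coordinate maps and moments
  have hXm : Measurable fun ω : (ℝ × ℝ) × ℝ × ℝ => ω.1.1 := measurable_fst.fst
  have hYm : Measurable fun ω : (ℝ × ℝ) × ℝ × ℝ => ω.1.2 := measurable_fst.snd
  have hX'm : Measurable fun ω : (ℝ × ℝ) × ℝ × ℝ => ω.2.1 := measurable_snd.fst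
  have hY'm : Measurable fun ω : (ℝ × ℝ) × ℝ × ℝ => ω.2.2 := measurable_snd.snd
  have hπ2fst : Integrable (fun p : ℝ × ℝ => p.1 ^ 2) π :=
    integrable_fst_comp hπ.1 (measurable_id.pow_const 2) hμ2
  have hπ2snd : Integrable (fun p : ℝ × ℝ => p.2 ^ 2) π :=
    integrable_snd_comp hπ.2 (measurable_id.pow_const 2) hν2
  have hX2 : Integrable (fun ω : (ℝ × ℝ) × ℝ × ℝ => ω.1.1 ^ 2) σ :=
    integrable_fst_comp hmapfst (measurable_fst.pow_const 2) hπ2fst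
  have hY2 : Integrable (fun ω : (ℝ × ℝ) × ℝ × ℝ => ω.1.2 ^ 2) σ :=
    integrable_fst_comp hmapfst (measurable_snd.pow_const 2) hπ2snd
  have hX'2 : Integrable (fun ω : (ℝ × ℝ) × ℝ × ℝ => ω.2.1 ^ 2) σ :=
    integrable_snd_comp hmapsnd (measurable_fst.pow_const 2)
      (integrable_fst_comp hprodfst (measurable_id.pow_const 2) hμ2)
  have hY'2 : Integrable (fun ω : (ℝ × ℝ) × ℝ × ℝ => ω.2.2 ^ 2) σ :=
    integrable_snd_comp hmapsnd (measurable_snd.pow_const 2)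
      (integrable_snd_comp hprodsnd (measurable_id.pow_const 2) hν2)
  -- the kernel function F
  set F : ((ℝ × ℝ) × ℝ × ℝ) × ℝ × ℝ → ℝ :=
    fun q => efn q.1.1.1 q.1.2.1 q.2.1 * efn q.1.1.2 q.1.2.2 q.2.2 with hF
  have hFmeas : Measurable F :=
    (measurable_efn_comp (hXm.comp measurable_fst) (hX'm.comp measurable_fst)
      measurable_snd.fst).mul
    (measurable_efn_comp (hYm.comp measurable_fst) (hY'm.comp measurable_fst)
      measurable_snd.snd)
  -- integrability of F on the product
  have habs_bound : Integrable (fun ω : (ℝ × ℝ) × ℝ × ℝ =>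
      |ω.1.1 - ω.2.1| * |ω.1.2 - ω.2.2|) σ := by
    refine ((hX2.add hX'2).add (hY2.add hY'2)).mono'
      (((hXm.sub hX'm).abs.mul (hYm.sub hY'm).abs)).aestronglyMeasurable
      (ae_of_all _ fun ω => ?_)
    rw [Real.norm_eq_abs, abs_of_nonneg (mul_nonneg (abs_nonneg _) (abs_nonneg _))]
    simp only [Pi.add_apply]
    nlinarith [sq_nonneg (|ω.1.1 - ω.2.1| - |ω.1.2 - ω.2.2|), sq_abs (ω.1.1 - ω.2.1),
      sq_abs (ω.1.2 - ω.2.2), sq_nonneg (ω.1.1 + ω.2.1), sq_nonneg (ω.1.2 + ω.2.2),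
      abs_nonneg (ω.1.1 - ω.2.1), abs_nonneg (ω.1.2 - ω.2.2)]
  have hFint : Integrable F (σ.prod (volume : Measure (ℝ × ℝ))) := by
    refine (integrable_prod_iff hFmeas.aestronglyMeasurable).2 ⟨?_, ?_⟩
    · refine ae_of_all _ fun ω => ?_
      rw [show (volume : Measure (ℝ × ℝ)) = (volume : Measure ℝ).prod volume from
        Measure.volume_eq_prod ℝ ℝ]
      exact (efn_integrable ω.1.1 ω.2.1).mul_prod (efn_integrable ω.1.2 ω.2.2)
    · have hval : ∀ ω : (ℝ × ℝ) × ℝ × ℝ, (∫ st : ℝ × ℝ, ‖F (ω, st)‖)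
          = |ω.1.1 - ω.2.1| * |ω.1.2 - ω.2.2| := by
        intro ω
        rw [show (volume : Measure (ℝ × ℝ)) = (volume : Measure ℝ).prod volume from
          Measure.volume_eq_prod ℝ ℝ]
        have : ∀ st : ℝ × ℝ, ‖F (ω, st)‖
            = |efn ω.1.1 ω.2.1 st.1| * |efn ω.1.2 ω.2.2 st.2| := fun st => by
          rw [Real.norm_eq_abs, abs_mul]
        simp_rw [this]
        rw [integral_prod_mul (fun s => |efn ω.1.1 ω.2.1 s|) (fun t => |efn ω.1.2 ω.2.2 t|),
          integral_abs_efn, integral_abs_efn]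
      exact habs_bound.congr (ae_of_all _ fun ω => (hval ω).symm)
  -- inner integral over st
  have inner_st : ∀ ω : (ℝ × ℝ) × ℝ × ℝ,
      (∫ st : ℝ × ℝ, F (ω, st)) = (ω.1.1 - ω.2.1) * (ω.1.2 - ω.2.2) := by
    intro ω
    rw [show (volume : Measure (ℝ × ℝ)) = (volume : Measure ℝ).prod volume from
      Measure.volume_eq_prod ℝ ℝ]
    rw [integral_prod_mul (fun s => efn ω.1.1 ω.2.1 s) (fun t => efn ω.1.2 ω.2.2 t),
      integral_efn, integral_efn]
  -- integral over ω of the inner integral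
  have hXY : Integrable (fun p : ℝ × ℝ => p.1 * p.2) π := by
    refine (hπ2fst.add hπ2snd).mono' (measurable_fst.mul measurable_snd).aestronglyMeasurable
      (ae_of_all _ fun p => ?_)
    rw [Real.norm_eq_abs, abs_mul]
    simp only [Pi.add_apply]
    nlinarith [sq_nonneg (|p.1| - |p.2|), sq_abs p.1, sq_abs p.2, abs_nonneg p.1, abs_nonneg p.2]
  have hint1 : Integrable (fun ω : (ℝ × ℝ) × ℝ × ℝ => ω.1.1 * ω.1.2) σ :=
    integrable_fst_comp hmapfst (measurable_fst.mul measurable_snd) hXY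
  have hμ1 : Integrable (fun x : ℝ => x) μ := integrable_id_of_sq hμ2
  have hν1 : Integrable (fun x : ℝ => x) ν := integrable_id_of_sq hν2
  have hπfst1 : Integrable (fun p : ℝ × ℝ => p.1) π :=
    integrable_fst_comp hπ.1 measurable_id hμ1
  have hπsnd1 : Integrable (fun p : ℝ × ℝ => p.2) π :=
    integrable_snd_comp hπ.2 measurable_id hν1
  have hprod1 : Integrable (fun q : ℝ × ℝ => q.1) (μ.prod ν) :=
    integrable_fst_comp hprodfst measurable_id hμ1
  have hprod2 : Integrable (fun q : ℝ × ℝ => q.2) (μ.prod ν) :=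
    integrable_snd_comp hprodsnd measurable_id hν1
  have hint2 : Integrable (fun ω : (ℝ × ℝ) × ℝ × ℝ => ω.1.1 * ω.2.2) σ :=
    hπfst1.mul_prod hprod2
  have hint3 : Integrable (fun ω : (ℝ × ℝ) × ℝ × ℝ => ω.2.1 * ω.1.2) σ := by
    have := hπsnd1.mul_prod hprod1
    refine this.congr (ae_of_all _ fun ω => ?_)
    simp [mul_comm]
  have hint4 : Integrable (fun ω : (ℝ × ℝ) × ℝ × ℝ => ω.2.1 * ω.2.2) σ :=
    integrable_snd_comp hmapsnd (measurable_fst.mul measurable_snd) (hμ1.mul_prod hν1)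
  have hintπ1 : ∫ p : ℝ × ℝ, p.1 ∂π = ∫ x, x ∂μ := integral_fst_comp hπ.1 measurable_id
  have hintπ2 : ∫ p : ℝ × ℝ, p.2 ∂π = ∫ y, y ∂ν := integral_snd_comp hπ.2 measurable_id
  have hintprod1 : ∫ q : ℝ × ℝ, q.1 ∂(μ.prod ν) = ∫ x, x ∂μ :=
    integral_fst_comp hprodfst measurable_id
  have hintprod2 : ∫ q : ℝ × ℝ, q.2 ∂(μ.prod ν) = ∫ y, y ∂ν :=
    integral_snd_comp hprodsnd measurable_id
  have lhs_eq : ∫ ω, (ω.1.1 - ω.2.1) * (ω.1.2 - ω.2.2) ∂σ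
      = ∫ p, p.1 * p.2 ∂π - (∫ x, x ∂μ) * (∫ y, y ∂ν) := by
    have expand : ∀ ω : (ℝ × ℝ) × ℝ × ℝ, (ω.1.1 - ω.2.1) * (ω.1.2 - ω.2.2)
        = ω.1.1 * ω.1.2 - ω.1.1 * ω.2.2 - ω.2.1 * ω.1.2 + ω.2.1 * ω.2.2 := fun ω => by ring
    simp_rw [expand]
    have I12 : Integrable (fun ω : (ℝ × ℝ) × ℝ × ℝ => ω.1.1 * ω.1.2 - ω.1.1 * ω.2.2) σ :=
      hint1.sub hint2
    have I123 : Integrable (fun ω : (ℝ × ℝ) × ℝ × ℝ =>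
        ω.1.1 * ω.1.2 - ω.1.1 * ω.2.2 - ω.2.1 * ω.1.2) σ := I12.sub hint3
    rw [integral_add I123 hint4, integral_sub I12 hint3, integral_sub hint1 hint2]
    have e1 : ∫ ω, ω.1.1 * ω.1.2 ∂σ = ∫ p, p.1 * p.2 ∂π :=
      integral_fst_comp hmapfst (measurable_fst.mul measurable_snd)
    have e2 : ∫ ω, ω.1.1 * ω.2.2 ∂σ = (∫ x, x ∂μ) * (∫ y, y ∂ν) := by
      rw [hσ, integral_prod_mul (fun p : ℝ × ℝ => p.1) (fun q : ℝ × ℝ => q.2), hintπ1,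
        hintprod2]
    have e3 : ∫ ω, ω.2.1 * ω.1.2 ∂σ = (∫ x, x ∂μ) * (∫ y, y ∂ν) := by
      have : ∀ ω : (ℝ × ℝ) × ℝ × ℝ, ω.2.1 * ω.1.2 = ω.1.2 * ω.2.1 := fun ω => mul_comm _ _
      simp_rw [this]
      rw [hσ, integral_prod_mul (fun p : ℝ × ℝ => p.2) (fun q : ℝ × ℝ => q.1), hintπ2,
        hintprod1]
      ring
    have e4 : ∫ ω, ω.2.1 * ω.2.2 ∂σ = (∫ x, x ∂μ) * (∫ y, y ∂ν) := by
      have : ∫ ω, ω.2.1 * ω.2.2 ∂σ = ∫ q : ℝ × ℝ, q.1 * q.2 ∂(μ.prod ν) :=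
        integral_snd_comp hmapsnd (measurable_fst.mul measurable_snd)
      rw [this, integral_prod_mul (fun x : ℝ => x) (fun y : ℝ => y)]
    rw [e1, e2, e3, e4]
    ring
  -- inner integral over ω
  have bdd_int : ∀ (f g : ((ℝ × ℝ) × ℝ × ℝ) → ℝ) (s t : ℝ), Measurable f → Measurable g →
      Integrable (fun ω => ios s (f ω) * ios t (g ω)) σ := by
    intro f g s t hf hg
    refine (integrable_const (1:ℝ)).mono'
      ((measurable_ios_comp hf s).mul (measurable_ios_comp hg t)).aestronglyMeasurable
      (ae_of_all _ fun ω => ?_)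
    rw [Real.norm_eq_abs, abs_mul, abs_of_nonneg (ios_nonneg _ _), abs_of_nonneg (ios_nonneg _ _)]
    exact mul_le_one₀ (ios_le_one _ _) (ios_nonneg _ _) (ios_le_one _ _)
  have inner_om : ∀ st : ℝ × ℝ, (∫ ω, F (ω, st) ∂σ)
      = (π (Ioi st.1 ×ˢ Ioi st.2)).toReal - (μ (Ioi st.1)).toReal * (ν (Ioi st.2)).toReal := by
    intro st
    have expand : ∀ ω : (ℝ × ℝ) × ℝ × ℝ, F (ω, st)
        = ios st.1 ω.1.1 * ios st.2 ω.1.2 - ios st.1 ω.1.1 * ios st.2 ω.2.2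
          - ios st.1 ω.2.1 * ios st.2 ω.1.2 + ios st.1 ω.2.1 * ios st.2 ω.2.2 := by
      intro ω
      simp only [hF, efn_flip]
      ring
    simp_rw [expand]
    have B1 := bdd_int _ _ st.1 st.2 hXm hYm
    have B2 := bdd_int _ _ st.1 st.2 hXm hY'm
    have B3 := bdd_int _ _ st.1 st.2 hX'm hYm
    have B4 := bdd_int _ _ st.1 st.2 hX'm hY'm
    have B12 : Integrable (fun ω : (ℝ × ℝ) × ℝ × ℝ =>
        ios st.1 ω.1.1 * ios st.2 ω.1.2 - ios st.1 ω.1.1 * ios st.2 ω.2.2) σ := B1.sub B2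
    have B123 : Integrable (fun ω : (ℝ × ℝ) × ℝ × ℝ =>
        ios st.1 ω.1.1 * ios st.2 ω.1.2 - ios st.1 ω.1.1 * ios st.2 ω.2.2
          - ios st.1 ω.2.1 * ios st.2 ω.1.2) σ := B12.sub B3
    rw [integral_add B123 B4, integral_sub B12 B3, integral_sub B1 B2]
    have hiosμ : ∫ x, ios st.1 x ∂μ = (μ (Ioi st.1)).toReal := integral_ios μ st.1
    have hiosν : ∫ y, ios st.2 y ∂ν = (ν (Ioi st.2)).toReal := integral_ios ν st.2
    have f1 : ∫ ω, ios st.1 ω.1.1 * ios st.2 ω.1.2 ∂σ = (π (Ioi st.1 ×ˢ Ioi st.2)).toReal := by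
      have h1 : ∫ ω, ios st.1 ω.1.1 * ios st.2 ω.1.2 ∂σ
          = ∫ p : ℝ × ℝ, ios st.1 p.1 * ios st.2 p.2 ∂π :=
        integral_fst_comp hmapfst
          ((measurable_ios_comp measurable_fst st.1).mul (measurable_ios_comp measurable_snd st.2))
      rw [h1]
      simp_rw [ios_mul_ios st.1 st.2]
      exact integral_indicator_one (measurableSet_Ioi.prod measurableSet_Ioi)
    have f2 : ∫ ω, ios st.1 ω.1.1 * ios st.2 ω.2.2 ∂σ
        = (μ (Ioi st.1)).toReal * (ν (Ioi st.2)).toReal := by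
      rw [hσ, integral_prod_mul (fun p : ℝ × ℝ => ios st.1 p.1) (fun q : ℝ × ℝ => ios st.2 q.2)]
      rw [show ∫ p : ℝ × ℝ, ios st.1 p.1 ∂π = ∫ x, ios st.1 x ∂μ from
          integral_fst_comp hπ.1 (measurable_ios_comp measurable_id st.1),
        show ∫ q : ℝ × ℝ, ios st.2 q.2 ∂(μ.prod ν) = ∫ y, ios st.2 y ∂ν from
          integral_snd_comp hprodsnd (measurable_ios_comp measurable_id st.2), hiosμ, hiosν]
    have f3 : ∫ ω, ios st.1 ω.2.1 * ios st.2 ω.1.2 ∂σ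
        = (μ (Ioi st.1)).toReal * (ν (Ioi st.2)).toReal := by
      have : ∀ ω : (ℝ × ℝ) × ℝ × ℝ, ios st.1 ω.2.1 * ios st.2 ω.1.2
          = ios st.2 ω.1.2 * ios st.1 ω.2.1 := fun ω => mul_comm _ _
      simp_rw [this]
      rw [hσ, integral_prod_mul (fun p : ℝ × ℝ => ios st.2 p.2) (fun q : ℝ × ℝ => ios st.1 q.1)]
      rw [show ∫ p : ℝ × ℝ, ios st.2 p.2 ∂π = ∫ y, ios st.2 y ∂ν from
          integral_snd_comp hπ.2 (measurable_ios_comp measurable_id st.2),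
        show ∫ q : ℝ × ℝ, ios st.1 q.1 ∂(μ.prod ν) = ∫ x, ios st.1 x ∂μ from
          integral_fst_comp hprodfst (measurable_ios_comp measurable_id st.1), hiosμ, hiosν]
      ring
    have f4 : ∫ ω, ios st.1 ω.2.1 * ios st.2 ω.2.2 ∂σ
        = (μ (Ioi st.1)).toReal * (ν (Ioi st.2)).toReal := by
      have h1 : ∫ ω, ios st.1 ω.2.1 * ios st.2 ω.2.2 ∂σ
          = ∫ q : ℝ × ℝ, ios st.1 q.1 * ios st.2 q.2 ∂(μ.prod ν) :=
        integral_snd_comp hmapsnd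
          ((measurable_ios_comp measurable_fst st.1).mul (measurable_ios_comp measurable_snd st.2))
      rw [h1, integral_prod_mul (fun x : ℝ => ios st.1 x) (fun y : ℝ => ios st.2 y), hiosμ, hiosν]
    rw [f1, f2, f3, f4]
    ring
  -- Fubini
  have swap : ∫ ω, (∫ st : ℝ × ℝ, F (ω, st)) ∂σ = ∫ st : ℝ × ℝ, (∫ ω, F (ω, st) ∂σ) := by
    exact integral_integral_swap (f := fun ω st => F (ω, st)) hFint
  constructor
  · have hswap : Integrable (fun st : ℝ × ℝ => ∫ ω, F (ω, st) ∂σ) volume := by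
      have h := (hFint.swap).integral_prod_left
      exact h
    exact hswap.congr (ae_of_all _ fun st => inner_om st)
  · calc ∫ st : ℝ × ℝ, ((π (Ioi st.1 ×ˢ Ioi st.2)).toReal
        - (μ (Ioi st.1)).toReal * (ν (Ioi st.2)).toReal)
        = ∫ st : ℝ × ℝ, (∫ ω, F (ω, st) ∂σ) := by
          refine integral_congr_ae (ae_of_all _ fun st => ?_)
          exact (inner_om st).symm
    _ = ∫ ω, (∫ st : ℝ × ℝ, F (ω, st)) ∂σ := swap.symm
    _ = ∫ ω, (ω.1.1 - ω.2.1) * (ω.1.2 - ω.2.2) ∂σ := by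
          refine integral_congr_ae (ae_of_all _ fun ω => ?_)
          exact inner_st ω
    _ = ∫ p, p.1 * p.2 ∂π - (∫ x, x ∂μ) * (∫ y, y ∂ν) := lhs_eq

end HoeffdingMain

section Optimality

variable {μ ν : Measure ℝ} [IsProbabilityMeasure μ] [IsProbabilityMeasure ν]

lemma coupling_isProb {π : Measure (ℝ × ℝ)} (hπ : IsCoupling π μ ν) :
    IsProbabilityMeasure π := by
  constructor
  have h := congrArg (fun m : Measure ℝ => m univ) hπ.1
  simpa [Measure.map_apply measurable_fst MeasurableSet.univ] using h

lemma coupling_fst_Ioi {π : Measure (ℝ × ℝ)} (hπ : IsCoupling π μ ν) (s : ℝ) :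
    π (Ioi s ×ˢ (univ : Set ℝ)) = μ (Ioi s) := by
  rw [← hπ.1, Measure.map_apply measurable_fst measurableSet_Ioi]
  congr 1
  ext p
  simp

lemma coupling_snd_Ioi {π : Measure (ℝ × ℝ)} (hπ : IsCoupling π μ ν) (t : ℝ) :
    π ((univ : Set ℝ) ×ˢ Ioi t) = ν (Ioi t) := by
  rw [← hπ.2, Measure.map_apply measurable_snd measurableSet_Ioi]
  congr 1
  ext p
  simp

lemma integrable_mul_fst_snd {π : Measure (ℝ × ℝ)}
    (h1 : Integrable (fun p : ℝ × ℝ => p.1 ^ 2) π)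
    (h2 : Integrable (fun p : ℝ × ℝ => p.2 ^ 2) π) :
    Integrable (fun p : ℝ × ℝ => p.1 * p.2) π := by
  refine (h1.add h2).mono' (measurable_fst.mul measurable_snd).aestronglyMeasurable
    (ae_of_all _ fun p => ?_)
  rw [Real.norm_eq_abs, abs_mul]
  simp only [Pi.add_apply]
  nlinarith [sq_nonneg (|p.1| - |p.2|), sq_abs p.1, sq_abs p.2, abs_nonneg p.1, abs_nonneg p.2]

theorem integral_mul_le_qc (π : Measure (ℝ × ℝ)) [IsProbabilityMeasure π]
    (hπ : IsCoupling π μ ν) (hμ2 : Integrable (fun x : ℝ => x ^ 2) μ)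
    (hν2 : Integrable (fun x : ℝ => x ^ 2) ν) :
    ∫ p, p.1 * p.2 ∂π ≤ ∫ p, p.1 * p.2 ∂(quantileCoupling μ ν) := by
  obtain ⟨hint, heq⟩ := hoeffding π hπ hμ2 hν2
  obtain ⟨hint', heq'⟩ := hoeffding (quantileCoupling μ ν) isCoupling_qc hμ2 hν2
  have hmono : ∀ st : ℝ × ℝ,
      (π (Ioi st.1 ×ˢ Ioi st.2)).toReal - (μ (Ioi st.1)).toReal * (ν (Ioi st.2)).toReal
        ≤ (quantileCoupling μ ν (Ioi st.1 ×ˢ Ioi st.2)).toReal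
          - (μ (Ioi st.1)).toReal * (ν (Ioi st.2)).toReal := by
    intro st
    have h1 : π (Ioi st.1 ×ˢ Ioi st.2) ≤ quantileCoupling μ ν (Ioi st.1 ×ˢ Ioi st.2) := by
      rw [qc_apply_Ioi]
      refine le_min ?_ ?_
      · exact (measure_mono (prod_mono_right (subset_univ _))).trans_eq
          (coupling_fst_Ioi hπ st.1)
      · exact (measure_mono (prod_mono_left (subset_univ _))).trans_eq
          (coupling_snd_Ioi hπ st.2)
    exact sub_le_sub_right (ENNReal.toReal_mono (measure_ne_top _ _) h1) _
  have := integral_mono hint hint' (fun st => hmono st)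
  rw [heq, heq'] at this
  linarith

lemma integrable_cost_sq {π : Measure (ℝ × ℝ)} [IsProbabilityMeasure π]
    (hπ : IsCoupling π μ ν) (hμ2 : Integrable (fun x : ℝ => x ^ 2) μ)
    (hν2 : Integrable (fun x : ℝ => x ^ 2) ν) :
    Integrable (fun p : ℝ × ℝ => (p.2 - p.1) ^ 2) π := by
  have h1 : Integrable (fun p : ℝ × ℝ => p.1 ^ 2) π :=
    integrable_fst_comp hπ.1 (measurable_id.pow_const 2) hμ2
  have h2 : Integrable (fun p : ℝ × ℝ => p.2 ^ 2) π :=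
    integrable_snd_comp hπ.2 (measurable_id.pow_const 2) hν2
  have hXY := integrable_mul_fst_snd h1 h2
  have hfun : (fun p : ℝ × ℝ => (p.2 - p.1) ^ 2)
      = fun p => p.2 ^ 2 - 2 * (p.1 * p.2) + p.1 ^ 2 := by
    funext p; ring
  rw [hfun]
  exact (h2.sub (hXY.const_mul 2)).add h1

lemma transportCost_eq_ofReal (π : Measure (ℝ × ℝ)) [IsProbabilityMeasure π]
    (hπ : IsCoupling π μ ν) (hμ2 : Integrable (fun x : ℝ => x ^ 2) μ)
    (hν2 : Integrable (fun x : ℝ => x ^ 2) ν) :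
    transportCost π = ENNReal.ofReal (∫ p : ℝ × ℝ, (p.2 - p.1) ^ 2 ∂π) := by
  rw [transportCost]
  have : ∀ p : ℝ × ℝ, ENNReal.ofReal (‖p.2 - p.1‖ ^ 2) = ENNReal.ofReal ((p.2 - p.1) ^ 2) := by
    intro p; rw [Real.norm_eq_abs, sq_abs]
  simp_rw [this]
  exact (ofReal_integral_eq_lintegral_ofReal (integrable_cost_sq hπ hμ2 hν2)
    (ae_of_all _ fun p => sq_nonneg _)).symm

lemma integral_cost_expand (π : Measure (ℝ × ℝ)) [IsProbabilityMeasure π]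
    (hπ : IsCoupling π μ ν) (hμ2 : Integrable (fun x : ℝ => x ^ 2) μ)
    (hν2 : Integrable (fun x : ℝ => x ^ 2) ν) :
    ∫ p : ℝ × ℝ, (p.2 - p.1) ^ 2 ∂π
      = (∫ x, x ^ 2 ∂μ) + (∫ y, y ^ 2 ∂ν) - 2 * ∫ p, p.1 * p.2 ∂π := by
  have h1 : Integrable (fun p : ℝ × ℝ => p.1 ^ 2) π :=
    integrable_fst_comp hπ.1 (measurable_id.pow_const 2) hμ2
  have h2 : Integrable (fun p : ℝ × ℝ => p.2 ^ 2) π :=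
    integrable_snd_comp hπ.2 (measurable_id.pow_const 2) hν2
  have hXY := integrable_mul_fst_snd h1 h2
  have hfun : ∀ p : ℝ × ℝ, (p.2 - p.1) ^ 2 = p.2 ^ 2 - 2 * (p.1 * p.2) + p.1 ^ 2 := by
    intro p; ring
  simp_rw [hfun]
  have hsub : Integrable (fun p : ℝ × ℝ => p.2 ^ 2 - 2 * (p.1 * p.2)) π :=
    h2.sub (hXY.const_mul 2)
  rw [integral_add hsub h1, integral_sub h2 (hXY.const_mul 2),
    MeasureTheory.integral_const_mul,
    integral_fst_comp (f := fun x : ℝ => x ^ 2) hπ.1 (measurable_id.pow_const 2),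
    integral_snd_comp (f := fun x : ℝ => x ^ 2) hπ.2 (measurable_id.pow_const 2)]
  ring

theorem qc_optimal (hμ2 : Integrable (fun x : ℝ => x ^ 2) μ)
    (hν2 : Integrable (fun x : ℝ => x ^ 2) ν) (π : Measure (ℝ × ℝ))
    (hπ : IsCoupling π μ ν) :
    transportCost (quantileCoupling μ ν) ≤ transportCost π := by
  haveI : IsProbabilityMeasure π := coupling_isProb hπ
  rw [transportCost_eq_ofReal π hπ hμ2 hν2,
    transportCost_eq_ofReal (quantileCoupling μ ν) isCoupling_qc hμ2 hν2,
    integral_cost_expand π hπ hμ2 hν2,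
    integral_cost_expand (quantileCoupling μ ν) isCoupling_qc hμ2 hν2]
  apply ENNReal.ofReal_le_ofReal
  have := integral_mul_le_qc π hπ hμ2 hν2
  linarith

theorem W2sq_eq_qc (hμ2 : Integrable (fun x : ℝ => x ^ 2) μ)
    (hν2 : Integrable (fun x : ℝ => x ^ 2) ν) :
    W2sq μ ν = transportCost (quantileCoupling μ ν) := by
  refine le_antisymm ?_ ?_
  · exact iInf₂_le (quantileCoupling μ ν) isCoupling_qc
  · exact le_iInf₂ fun π hπ => qc_optimal hμ2 hν2 π hπ

end Optimality

section Partitions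

variable {X : Type*} [MetricSpace X]

lemma dist_sq_div_le (c : ℕ → X) {a b : ℕ} (hab : a < b) :
    dist (c a) (c b) ^ 2 / ((b : ℝ) - (a : ℝ))
      ≤ ∑ i ∈ Finset.Ico a b, dist (c i) (c (i + 1)) ^ 2 := by
  have htri : dist (c a) (c b) ≤ ∑ i ∈ Finset.Ico a b, dist (c i) (c (i + 1)) := by
    have h := dist_le_range_sum_dist (fun i => c (a + i)) (b - a)
    rw [Nat.add_sub_cancel' hab.le] at h
    refine h.trans_eq ?_
    rw [Finset.sum_Ico_eq_sum_range]
    exact Finset.sum_congr rfl fun i _ => rfl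
  have hCS : (∑ i ∈ Finset.Ico a b, dist (c i) (c (i + 1))) ^ 2
      ≤ ((Finset.Ico a b).card : ℝ) * ∑ i ∈ Finset.Ico a b, dist (c i) (c (i + 1)) ^ 2 :=
    sq_sum_le_card_mul_sum_sq
  rw [Nat.card_Ico, Nat.cast_sub hab.le] at hCS
  have hpos : (0:ℝ) < (b : ℝ) - (a : ℝ) := by
    have : (a : ℝ) < b := Nat.cast_lt.2 hab
    linarith
  rw [div_le_iff₀ hpos]
  calc dist (c a) (c b) ^ 2 ≤ (∑ i ∈ Finset.Ico a b, dist (c i) (c (i + 1))) ^ 2 := by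
        apply pow_le_pow_left₀ dist_nonneg htri
    _ ≤ ((b : ℝ) - (a : ℝ)) * ∑ i ∈ Finset.Ico a b, dist (c i) (c (i + 1)) ^ 2 := hCS
    _ = (∑ i ∈ Finset.Ico a b, dist (c i) (c (i + 1)) ^ 2) * ((b : ℝ) - (a : ℝ)) := by ring

lemma sum_Ico_parts (f : ℕ → ℝ) : ∀ (m : ℕ) (k : Fin (m + 2) → ℕ), Monotone k →
    (∑ j : Fin (m + 1), ∑ i ∈ Finset.Ico (k j.castSucc) (k j.succ), f i)
      = ∑ i ∈ Finset.Ico (k 0) (k (Fin.last (m + 1))), f i := by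
  intro m
  induction m with
  | zero =>
    intro k _
    rw [Fin.sum_univ_one]
    rfl
  | succ m ih =>
    intro k hk
    rw [Fin.sum_univ_castSucc]
    have hcomp := ih (k ∘ Fin.castSucc) (hk.comp Fin.strictMono_castSucc.monotone)
    have hterms : (∑ j : Fin (m + 1), ∑ i ∈ Finset.Ico (k j.castSucc.castSucc)
        (k j.castSucc.succ), f i)
        = ∑ i ∈ Finset.Ico (k 0) (k ((Fin.last (m + 1)).castSucc)), f i := by
      have : ∀ j : Fin (m + 1), Finset.Ico (k j.castSucc.castSucc) (k j.castSucc.succ)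
          = Finset.Ico ((k ∘ Fin.castSucc) j.castSucc) ((k ∘ Fin.castSucc) j.succ) := by
        intro j
        simp only [Function.comp_apply, Fin.succ_castSucc]
      simp_rw [this]
      rw [hcomp]
      simp only [Function.comp_apply, Fin.castSucc_zero]
    rw [hterms, Fin.succ_last]
    exact Finset.sum_Ico_consecutive f (hk (Fin.zero_le _)) (hk (Fin.le_last _))

lemma grid_le (c : ℕ → X) {m : ℕ} (k : Fin (m + 2) → ℕ) (hk : StrictMono k) :
    (∑ j : Fin (m + 1), dist (c (k j.castSucc)) (c (k j.succ)) ^ 2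
        / ((k j.succ : ℝ) - (k j.castSucc : ℝ)))
      ≤ ∑ i ∈ Finset.Ico (k 0) (k (Fin.last (m + 1))), dist (c i) (c (i + 1)) ^ 2 := by
  rw [← sum_Ico_parts _ m k hk.monotone]
  exact Finset.sum_le_sum fun j _ => dist_sq_div_le c (hk (Fin.castSucc_lt_succ (i := j)))

/-- dyadic partitions -/
def dm (n : ℕ) : ℕ := 2 ^ n - 1

lemma dm_add_one (n : ℕ) : dm n + 1 = 2 ^ n := Nat.succ_pred_eq_of_pos (Nat.two_pow_pos n)

noncomputable def dyad (n : ℕ) : Fin (dm n + 2) → ℝ := fun i => (i : ℕ) / (2 ^ n : ℝ)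

lemma isPartition_dyad (n : ℕ) : IsPartition (dyad n) := by
  have hN : (0:ℝ) < 2 ^ n := by positivity
  refine ⟨fun i j hij => ?_, by simp [dyad], ?_⟩
  · refine (div_lt_div_iff_of_pos_right hN).2 ?_
    exact_mod_cast hij
  · simp only [dyad, Fin.val_last]
    rw [dm_add_one]
    push_cast
    field_simp

end Partitions


section DyadicCompare

variable {X : Type*} [MetricSpace X]

/-- any sub-grid partition has smaller energy sum than the full dyadic grid -/
lemma energySum_subgrid_le (γ : ℝ → X) {n m : ℕ} (k : Fin (m + 2) → ℕ)
    (hk : StrictMono k) (h0 : k 0 = 0) (hl : k (Fin.last (m + 1)) = 2 ^ n) :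
    energySum γ (fun j => (k j : ℝ) / 2 ^ n) ≤ energySum γ (dyad n) := by
  have hN : (0:ℝ) < 2 ^ n := by positivity
  set c : ℕ → X := fun i => γ ((i : ℝ) / 2 ^ n) with hc
  have LHS_eq : energySum γ (fun j => (k j : ℝ) / 2 ^ n)
      = ∑ j : Fin (m + 1), (2:ℝ) ^ n *
        (dist (c (k j.castSucc)) (c (k j.succ)) ^ 2 / ((k j.succ : ℝ) - (k j.castSucc : ℝ))) := by
    unfold energySum
    refine Finset.sum_congr rfl fun j _ => ?_
    rw [div_sub_div_same, div_div_eq_mul_div, mul_comm _ ((2:ℝ) ^ n), mul_div_assoc]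
  have RHS_eq : energySum γ (dyad n)
      = ∑ i ∈ Finset.range (2 ^ n), (2:ℝ) ^ n * dist (c i) (c (i + 1)) ^ 2 := by
    unfold energySum dyad
    rw [← Fin.sum_univ_eq_sum_range (fun i => (2:ℝ) ^ n * dist (c i) (c (i + 1)) ^ 2) (2 ^ n),
      ← dm_add_one]
    refine Finset.sum_congr rfl fun j _ => ?_
    have hv1 : ((j.castSucc : Fin (dm n + 2)) : ℕ) = (j : ℕ) := rfl
    have hv2 : ((j.succ : Fin (dm n + 2)) : ℕ) = (j : ℕ) + 1 := rfl
    rw [hv1, hv2]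
    have hden : (((j : ℕ) + 1 : ℕ) : ℝ) / 2 ^ n - ((j : ℕ) : ℝ) / 2 ^ n = 1 / 2 ^ n := by
      push_cast
      ring
    rw [hden, div_div_eq_mul_div, div_one, mul_comm]
  rw [LHS_eq, RHS_eq, ← Finset.mul_sum, ← Finset.mul_sum]
  refine mul_le_mul_of_nonneg_left ?_ hN.le
  have := grid_le c k hk
  rw [h0, hl, ← Finset.range_eq_Ico] at this
  exact this

lemma energySum_dyad_mono (γ : ℝ → X) (n : ℕ) :
    energySum γ (dyad n) ≤ energySum γ (dyad (n + 1)) := by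
  have key := energySum_subgrid_le γ (n := n + 1) (m := dm n) (fun j => 2 * (j : ℕ))
    (fun i j hij => by simpa using Fin.lt_def.1 hij)
    (by simp) (by simp [Fin.val_last, dm_add_one, pow_succ]; ring)
  have hfun : (fun j : Fin (dm n + 2) => ((2 * (j : ℕ) : ℕ) : ℝ) / 2 ^ (n + 1)) = dyad n := by
    funext j
    simp only [dyad]
    push_cast
    rw [pow_succ]
    field_simp
  rwa [hfun] at key

end DyadicCompare


section Approx

variable {X : Type*} [MetricSpace X]

lemma energy_le_iSup_dyad (γ : ℝ → X) (hγ : ContinuousOn γ (Icc (0:ℝ) 1))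
    {m : ℕ} (r : Fin (m + 2) → ℝ) (hr : IsPartition r) :
    ENNReal.ofReal (energySum γ r) ≤ ⨆ n, ENNReal.ofReal (energySum γ (dyad n)) := by
  obtain ⟨hmono, h0, h1⟩ := hr
  have hr01 : ∀ j, r j ∈ Icc (0:ℝ) 1 := fun j =>
    ⟨h0 ▸ hmono.monotone (Fin.zero_le j), h1 ▸ hmono.monotone (Fin.le_last j)⟩
  set k : ℕ → Fin (m + 2) → ℕ := fun n j => ⌈r j * 2 ^ n⌉₊ with hk
  set rn : ℕ → Fin (m + 2) → ℝ := fun n j => (k n j : ℝ) / 2 ^ n with hrn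
  have hNpos : ∀ n : ℕ, (0:ℝ) < 2 ^ n := fun n => by positivity
  have hk0 : ∀ n, k n 0 = 0 := fun n => by simp [hk, h0]
  have hklast : ∀ n, k n (Fin.last (m + 1)) = 2 ^ n := by
    intro n
    simp only [hk, h1, one_mul]
    rw [show ((2:ℝ) ^ n) = ((2 ^ n : ℕ) : ℝ) by push_cast; ring]
    exact Nat.ceil_natCast _
  have hle : ∀ n j, r j ≤ rn n j := by
    intro n j
    rw [hrn, le_div_iff₀ (hNpos n)]
    exact Nat.le_ceil _
  have hlt : ∀ n j, rn n j < r j + 1 / 2 ^ n := by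
    intro n j
    rw [hrn, div_lt_iff₀ (hNpos n)]
    have := Nat.ceil_lt_add_one (mul_nonneg ((hr01 j).1) (hNpos n).le)
    calc ((k n j : ℝ)) < r j * 2 ^ n + 1 := this
      _ = (r j + 1 / 2 ^ n) * 2 ^ n := by field_simp
  have htend : ∀ j, Filter.Tendsto (fun n => rn n j) atTop (nhds (r j)) := by
    intro j
    have hupper : Filter.Tendsto (fun n : ℕ => r j + (1/2 : ℝ) ^ n) atTop (nhds (r j)) := by
      have h2 : Filter.Tendsto (fun n : ℕ => ((1:ℝ)/2) ^ n) atTop (nhds 0) :=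
        tendsto_pow_atTop_nhds_zero_of_lt_one (by norm_num) (by norm_num)
      simpa using (tendsto_const_nhds (x := r j)).add h2
    refine tendsto_of_tendsto_of_tendsto_of_le_of_le tendsto_const_nhds hupper
      (fun n => hle n j) (fun n => ?_)
    have := hlt n j
    rw [div_pow, one_pow]
    linarith
  have hrn01 : ∀ n j, rn n j ∈ Icc (0:ℝ) 1 := by
    intro n j
    constructor
    · exact div_nonneg (Nat.cast_nonneg _) (hNpos n).le
    · rw [hrn, div_le_one (hNpos n)]
      have hkle : k n j ≤ 2 ^ n := by
        rw [hk]
        refine Nat.ceil_le.2 ?_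
        rw [show ((2 ^ n : ℕ) : ℝ) = (2:ℝ) ^ n by push_cast; ring]
        exact mul_le_of_le_one_left (hNpos n).le (hr01 j).2 |>.trans le_rfl
      calc ((k n j : ℝ)) ≤ ((2 ^ n : ℕ) : ℝ) := Nat.cast_le.2 hkle
        _ = (2:ℝ) ^ n := by push_cast; ring
  have hgap : ∀ j : Fin (m + 1), r j.castSucc < r j.succ := fun j =>
    hmono (Fin.castSucc_lt_succ (i := j))
  -- eventual strict monotonicity
  have hev : ∀ᶠ n in atTop, StrictMono (k n) := by
    set δ : ℝ := Finset.univ.inf' ⟨0, Finset.mem_univ 0⟩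
      (fun j : Fin (m + 1) => r j.succ - r j.castSucc) with hδ
    have hδpos : 0 < δ := by
      rw [hδ]; apply (Finset.lt_inf'_iff _).2
      exact fun j _ => sub_pos.2 (hgap j)
    have h2 : Filter.Tendsto (fun n : ℕ => (2:ℝ) ^ n) atTop atTop :=
      tendsto_pow_atTop_atTop_of_one_lt (by norm_num)
    filter_upwards [h2.eventually_ge_atTop (2 / δ)] with n hn
    have hstep : ∀ j : Fin (m + 1), k n j.castSucc < k n j.succ := by
      intro j
      have hd : δ ≤ r j.succ - r j.castSucc :=
        Finset.inf'_le _ (Finset.mem_univ j)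
      have h2le : 2 ≤ (r j.succ - r j.castSucc) * 2 ^ n := by
        have h1 : 2 / δ ≤ 2 ^ n := hn
        have e : δ * (2 / δ) = 2 := by field_simp
        calc (2:ℝ) = δ * (2 / δ) := e.symm
          _ ≤ (r j.succ - r j.castSucc) * 2 ^ n :=
            mul_le_mul hd h1 (by positivity) (by linarith [hgap j])
      have hcast : ((k n j.castSucc : ℝ)) < (k n j.succ : ℝ) := by
        have hlt1 : (k n j.castSucc : ℝ) < r j.castSucc * 2 ^ n + 1 :=
          Nat.ceil_lt_add_one (mul_nonneg (hr01 _).1 (hNpos n).le)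
        have hge : r j.succ * 2 ^ n ≤ (k n j.succ : ℝ) := Nat.le_ceil _
        nlinarith [hNpos n]
      exact_mod_cast hcast
    exact Fin.strictMono_iff_lt_succ.2 hstep
  -- convergence of the energy sums
  have hγt : ∀ j, Filter.Tendsto (fun n => γ (rn n j)) atTop (nhds (γ (r j))) := by
    intro j
    have hcw : ContinuousWithinAt γ (Icc 0 1) (r j) := hγ.continuousWithinAt (hr01 j)
    exact hcw.tendsto.comp (tendsto_nhdsWithin_of_tendsto_nhds_of_eventually_within _
      (htend j) (Filter.Eventually.of_forall fun n => hrn01 n j))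
  have hterm : Filter.Tendsto (fun n => energySum γ (rn n)) atTop (nhds (energySum γ r)) := by
    unfold energySum
    apply tendsto_finset_sum
    intro j _
    have hd : Filter.Tendsto (fun n => dist (γ (rn n j.castSucc)) (γ (rn n j.succ))) atTop
        (nhds (dist (γ (r j.castSucc)) (γ (r j.succ)))) := (hγt _).dist (hγt _)
    have hden : Filter.Tendsto (fun n => rn n j.succ - rn n j.castSucc) atTop
        (nhds (r j.succ - r j.castSucc)) := (htend _).sub (htend _)
    exact (hd.pow 2).div hden (sub_ne_zero.2 (hgap j).ne')
  have hofreal : Filter.Tendsto (fun n => ENNReal.ofReal (energySum γ (rn n))) atTop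
      (nhds (ENNReal.ofReal (energySum γ r))) :=
    (ENNReal.continuous_ofReal.tendsto _).comp hterm
  refine le_of_tendsto hofreal ?_
  filter_upwards [hev] with n hn
  refine le_trans (ENNReal.ofReal_le_ofReal ?_) (le_iSup
    (fun n => ENNReal.ofReal (energySum γ (dyad n))) n)
  exact energySum_subgrid_le γ (k n) hn (hk0 n) (hklast n)

end Approx



lemma energy_eq_iSup_dyad {X : Type*} [MetricSpace X] (γ : ℝ → X)
    (hγ : ContinuousOn γ (Icc (0:ℝ) 1)) :
    energy γ = ⨆ n, ENNReal.ofReal (energySum γ (dyad n)) := by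
  refine le_antisymm ?_ ?_
  · rw [energy]
    exact iSup_le fun m => iSup_le fun r => iSup_le fun hr => energy_le_iSup_dyad γ hγ r hr
  · refine iSup_le fun n => ?_
    rw [energy]
    exact le_iSup_of_le (dm n) (le_iSup_of_le (dyad n)
      (le_iSup_of_le (isPartition_dyad n) le_rfl))

lemma measurable_energySum_ofReal {m : ℕ} (r : Fin (m + 2) → ℝ) :
    Measurable (fun γ : ℝ → ℝ => ENNReal.ofReal (energySum γ r)) := by
  apply Measurable.ennreal_ofReal
  apply Finset.measurable_sum
  intro k _
  exact (((measurable_pi_apply (r k.castSucc)).dist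
    (measurable_pi_apply (r k.succ))).pow_const 2).div_const _

lemma lintegral_energySum (μ : ℝ → Measure ℝ)
    (hμprob : ∀ t, IsProbabilityMeasure (μ t))
    (hμ2 : ∀ t, ∫⁻ x, ENNReal.ofReal (x ^ 2) ∂(μ t) ≠ ⊤)
    (Γ : Measure (ℝ → ℝ)) [IsProbabilityMeasure Γ]
    (hq : ∀ s t : ℝ, 0 ≤ s → s < t → t ≤ 1 →
      Γ.map (fun γ => (γ s, γ t)) = quantileCoupling (μ s) (μ t))
    {m : ℕ} (r : Fin (m + 2) → ℝ) (hr : IsPartition r) :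
    ∫⁻ γ, ENNReal.ofReal (energySum γ r) ∂Γ
      = ∑ k : Fin (m + 1),
          W2sq (μ (r k.castSucc)) (μ (r k.succ)) / ENNReal.ofReal (r k.succ - r k.castSucc) := by
  have h1 : ∀ γ : ℝ → ℝ, ENNReal.ofReal (energySum γ r)
      = ∑ k : Fin (m + 1), ENNReal.ofReal
          (dist (γ (r k.castSucc)) (γ (r k.succ)) ^ 2 / (r k.succ - r k.castSucc)) := by
    intro γ
    exact ENNReal.ofReal_sum_of_nonneg fun k _ =>
      div_nonneg (sq_nonneg _) (sub_nonneg.2 (hr.1 (Fin.castSucc_lt_succ (i := k))).le)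
  rw [lintegral_congr h1, lintegral_finset_sum]
  swap
  · intro k _
    exact (((measurable_pi_apply (r k.castSucc)).dist
      (measurable_pi_apply (r k.succ))).pow_const 2).div_const _ |>.ennreal_ofReal
  refine Finset.sum_congr rfl fun k _ => ?_
  set s := r k.castSucc with hs
  set t := r k.succ with ht
  have hst : s < t := hr.1 (Fin.castSucc_lt_succ (i := k))
  have hs0 : 0 ≤ s := by
    rw [hs, ← hr.2.1]
    exact hr.1.monotone (Fin.zero_le _)
  have ht1 : t ≤ 1 := by
    rw [ht, ← hr.2.2]
    exact hr.1.monotone (Fin.le_last _)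
  haveI := hμprob s
  haveI := hμprob t
  have hpos : 0 < t - s := sub_pos.2 hst
  have hdiv : ∀ γ : ℝ → ℝ, ENNReal.ofReal (dist (γ s) (γ t) ^ 2 / (t - s))
      = ENNReal.ofReal (dist (γ s) (γ t) ^ 2) * (ENNReal.ofReal (t - s))⁻¹ := by
    intro γ
    rw [ENNReal.ofReal_div_of_pos hpos, div_eq_mul_inv]
  rw [lintegral_congr hdiv, lintegral_mul_const _
    (((measurable_pi_apply s).dist (measurable_pi_apply t)).pow_const 2).ennreal_ofReal]
  have hpair : Measurable (fun γ : ℝ → ℝ => (γ s, γ t)) :=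
    (measurable_pi_apply s).prodMk (measurable_pi_apply t)
  have hcostmeas : Measurable (fun p : ℝ × ℝ => ENNReal.ofReal (dist p.1 p.2 ^ 2)) :=
    ((measurable_fst.dist measurable_snd).pow_const 2).ennreal_ofReal
  have hmap : ∫⁻ γ, ENNReal.ofReal (dist (γ s) (γ t) ^ 2) ∂Γ
      = ∫⁻ p : ℝ × ℝ, ENNReal.ofReal (dist p.1 p.2 ^ 2)
          ∂(Γ.map (fun γ => (γ s, γ t))) := (lintegral_map hcostmeas hpair).symm
  rw [hmap, hq s t hs0 hst ht1]
  have hcost : ∫⁻ p : ℝ × ℝ, ENNReal.ofReal (dist p.1 p.2 ^ 2)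
      ∂(quantileCoupling (μ s) (μ t)) = transportCost (quantileCoupling (μ s) (μ t)) := by
    rw [transportCost]
    refine lintegral_congr fun p => ?_
    rw [Real.dist_eq, Real.norm_eq_abs, abs_sub_comm]
  rw [hcost, ← W2sq_eq_qc (integrable_sq_of_lintegral (hμ2 s)) (integrable_sq_of_lintegral (hμ2 t)),
    div_eq_mul_inv]


/-- If `Γ` is a law on `C([0,1], ℝ)` with time marginals `μ t ∈ P₂(ℝ)` whose
two-dimensional marginals are all quantile couplings, then its action equals the
Wasserstein energy of the marginal curve: `A(Γ) = E(μ)`. -/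
theorem stmt_14 (μ : ℝ → Measure ℝ)
    (hμprob : ∀ t, IsProbabilityMeasure (μ t))
    (hμ2 : ∀ t, ∫⁻ x, ENNReal.ofReal (x ^ 2) ∂(μ t) ≠ ⊤)
    (Γ : Measure (ℝ → ℝ)) [IsProbabilityMeasure Γ]
    (hcont : ∀ᵐ γ ∂Γ, ContinuousOn γ (Icc (0 : ℝ) 1))
    (hmarg : ∀ t ∈ Icc (0 : ℝ) 1, Γ.map (fun γ => γ t) = μ t)
    (hq : ∀ s t : ℝ, 0 ≤ s → s < t → t ≤ 1 →
      Γ.map (fun γ => (γ s, γ t)) = quantileCoupling (μ s) (μ t)) :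
    ∫⁻ γ, energy γ ∂Γ = energyW2 μ := by
  refine le_antisymm ?_ ?_
  · have hae : ∀ᵐ γ ∂Γ, energy γ = ⨆ n, ENNReal.ofReal (energySum γ (dyad n)) :=
      hcont.mono fun γ h => energy_eq_iSup_dyad γ h
    rw [lintegral_congr_ae hae, lintegral_iSup
      (fun n => measurable_energySum_ofReal (dyad n))
      (monotone_nat_of_le_succ fun n γ => ENNReal.ofReal_le_ofReal (energySum_dyad_mono γ n))]
    refine iSup_le fun n => ?_
    rw [lintegral_energySum μ hμprob hμ2 Γ hq (dyad n) (isPartition_dyad n)]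
    rw [energyW2]
    exact le_iSup_of_le (dm n) (le_iSup_of_le (dyad n)
      (le_iSup_of_le (isPartition_dyad n) le_rfl))
  · rw [energyW2]
    refine iSup_le fun m => iSup_le fun r => iSup_le fun hr => ?_
    rw [← lintegral_energySum μ hμprob hμ2 Γ hq r hr]
    refine lintegral_mono fun γ => ?_
    rw [energy]
    exact le_iSup_of_le m (le_iSup_of_le r (le_iSup_of_le hr le_rfl))
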